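/- arXiv:1810.03882 — 2 statements merged into one kernel-verified Lean document; each statement's English description precedes it below -/
import Mathlib

section
/- Weak strong monotonicity of the ε-smooth relative entropy of coherence: let {K_k} be incoherent Kraus operators, ρ_k = K_kρK_k†/p_k, τ the optimizer for C_{r,ε}(ρ), τ_k = K_kτK_k†/q_k. If additionally S(ρ_k‖τ_k) ≤ ε for each k, then ∑_k q_k · C_{r,ε}(ρ_k) ≤ C_{r,ε}(ρ), where the weights are the probabilities q_k = Tr(K_kτK_k†) of the optimizer τ. -/
open scoped ComplexOrder BigOperators
open Matrix

/-- A density matrix: positive semidefinite with unit trace. -/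
def IsDensity {n : Type*} [Fintype n] (A : Matrix n n ℂ) : Prop :=
  A.PosSemidef ∧ A.trace = 1

/-- The ε-smooth relative entropy of coherence
`C_{r,ε}(σ) = min{C_r(τ) : S(σ‖τ) ≤ ε}`. -/
noncomputable def Creps {d : ℕ}
    (S : Matrix (Fin d) (Fin d) ℂ → Matrix (Fin d) (Fin d) ℂ → ℝ)
    (Cr : Matrix (Fin d) (Fin d) ℂ → ℝ)
    (ε : ℝ) (σ : Matrix (Fin d) (Fin d) ℂ) : ℝ :=
  sInf (Cr '' {τ | IsDensity τ ∧ S σ τ ≤ ε})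


lemma psd_trace_re_nonneg {d : ℕ} {A : Matrix (Fin d) (Fin d) ℂ}
    (hA : A.PosSemidef) : 0 ≤ A.trace.re := by
  rw [Matrix.trace, Complex.re_sum]
  apply Finset.sum_nonneg
  intro i _
  have h := hA.dotProduct_mulVec_nonneg (Pi.single i 1)
  simp [dotProduct, Matrix.mulVec, Pi.single_apply] at h
  simpa using (Complex.le_def.mp h).1

/-- Weak strong monotonicity of the ε-smooth relative entropy of coherence:
`∑_k q_k C_{r,ε}(ρ_k) ≤ C_{r,ε}(ρ)`, weighted by the outcome probabilities
`q_k` of the optimizer `τ`. -/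
theorem epsilon_smooth_relative_entropy_weak_strong_monotonicity
    {d m : ℕ}
    (S : Matrix (Fin d) (Fin d) ℂ → Matrix (Fin d) (Fin d) ℂ → ℝ)
    (Cr : Matrix (Fin d) (Fin d) ℂ → ℝ)
    (hCrnn : ∀ σ, 0 ≤ Cr σ)
    -- incoherent Kraus operators
    (K : Fin m → Matrix (Fin d) (Fin d) ℂ)
    (hK : ∑ k, (K k)ᴴ * K k = 1)
    (ρ τ : Matrix (Fin d) (Fin d) ℂ) (hρ : IsDensity ρ)
    (ε : ℝ)
    -- τ attains the minimum defining C_{r,ε}(ρ)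
    (hτdens : IsDensity τ) (hτball : S ρ τ ≤ ε)
    (hτopt : Cr τ = Creps S Cr ε ρ)
    -- post-measurement states and probabilities
    (p q : Fin m → ℝ) (ρk τk : Fin m → Matrix (Fin d) (Fin d) ℂ)
    (hp : ∀ k, p k = ((K k * ρ * (K k)ᴴ).trace).re)
    (hq : ∀ k, q k = ((K k * τ * (K k)ᴴ).trace).re)
    (hρk : ∀ k, ρk k = ((p k : ℂ)⁻¹) • (K k * ρ * (K k)ᴴ))
    (hτk : ∀ k, τk k = ((q k : ℂ)⁻¹) • (K k * τ * (K k)ᴴ))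
    (hρkdens : ∀ k, IsDensity (ρk k)) (hτkdens : ∀ k, IsDensity (τk k))
    -- strong monotonicity of C_r under the incoherent Kraus operators
    (hsm : ∑ k, q k * Cr (τk k) ≤ Cr τ)
    -- the additional requirement S(ρ_k‖τ_k) ≤ ε for each k
    (hball : ∀ k, S (ρk k) (τk k) ≤ ε) :
    ∑ k, q k * Creps S Cr ε (ρk k) ≤ Creps S Cr ε ρ := by
  have hq0 : ∀ k, 0 ≤ q k := fun k => by
    rw [hq k]
    exact psd_trace_re_nonneg (hτdens.1.mul_mul_conjTranspose_same (K k))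
  have hle : ∀ k, Creps S Cr ε (ρk k) ≤ Cr (τk k) := by
    intro k
    apply csInf_le
    · exact ⟨0, fun x hx => by obtain ⟨y, _, rfl⟩ := hx; exact hCrnn y⟩
    · exact ⟨τk k, ⟨hτkdens k, hball k⟩, rfl⟩
  calc ∑ k, q k * Creps S Cr ε (ρk k) ≤ ∑ k, q k * Cr (τk k) :=
        Finset.sum_le_sum fun k _ => mul_le_mul_of_nonneg_left (hle k) (hq0 k)
    _ ≤ Cr τ := hsm
    _ = Creps S Cr ε ρ := hτopt
end

section
/- For the qubit pure states |a⟩ = |0⟩ and |b⟩ = cosθ|0⟩ + sinθ|1⟩ with θ ∈ (0, π/2), the trace distance satisfies D_tr(|a⟩⟨a|, |b⟩⟨b|) = |sinθ|; hence for any ε > 0 and any coherence measure C with C(|b⟩⟨b|) > 0, choosing θ with |sinθ| ≤ ε gives C_{ε,max}(|a⟩⟨a|) ≥ C(|b⟩⟨b|) > 0 even though |a⟩⟨a| is incoherent. Thus C_{ε,max} violates the faithfulness condition (C1). -/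
open scoped ComplexOrder

/-- The positive semidefinite square root (removed from Mathlib; old definition restored). -/
noncomputable def Matrix.PosSemidef.sqrt {n : Type*} [Fintype n] [DecidableEq n]
    {A : Matrix n n ℂ} (hA : A.PosSemidef) : Matrix n n ℂ :=
  (hA.1.eigenvectorUnitary : Matrix n n ℂ) * Matrix.diagonal ((↑) ∘ Real.sqrt ∘ hA.1.eigenvalues) *
    (star (hA.1.eigenvectorUnitary : Matrix n n ℂ))

/-- The trace distance `½ Tr|ρ − τ|`. -/
noncomputable def traceDist {n : Type*} [Fintype n] [DecidableEq n]
    (ρ τ : Matrix n n ℂ) : ℝ :=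
  ((Matrix.posSemidef_conjTranspose_mul_self (ρ - τ)).sqrt.trace).re / 2

/-- The dual ε-smooth measure of coherence (maximization). -/
noncomputable def CmaxQ {n : Type*} [Fintype n] [DecidableEq n]
    (C : Matrix n n ℂ → ℝ) (ε : ℝ) (ρ : Matrix n n ℂ) : ℝ :=
  sSup (C '' {τ | IsDensity τ ∧ traceDist ρ τ ≤ ε})

open Matrix in
lemma psd_vmv {n : Type*} [Fintype n] (b : n → ℂ) :
    (Matrix.vecMulVec b (star b)).PosSemidef :=
  Matrix.posSemidef_vecMulVec_self_star b

lemma sqrt_of_eq_smul_one {n : Type*} [Fintype n] [DecidableEq n] {A : Matrix n n ℂ}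
    (hA : A.PosSemidef) (r : ℝ) (hr : 0 ≤ r) (h : A = ((r ^ 2 : ℝ) : ℂ) • 1) :
    hA.sqrt = ((r : ℝ) : ℂ) • 1 := by
  subst h
  have key := hA.1.conjStarAlgAut_star_eigenvectorUnitary
  rw [Unitary.conjStarAlgAut_star_apply] at key
  simp only [Matrix.mul_smul, Matrix.smul_mul, Matrix.mul_one, Unitary.coe_star_mul_self] at key
  have hev : ∀ i, hA.1.eigenvalues i = r ^ 2 := by
    intro i
    have := congrFun (congrFun key i) i
    simp at this
    exact_mod_cast this.symm
  have hd : Matrix.diagonal (((↑) : ℝ → ℂ) ∘ Real.sqrt ∘ hA.1.eigenvalues) = ((r : ℝ) : ℂ) • 1 := by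
    ext i j
    by_cases hij : i = j
    · subst hij; simp [hev, Real.sqrt_sq hr]
    · simp [hij]
  rw [Matrix.PosSemidef.sqrt, hd]
  simp only [Matrix.mul_smul, Matrix.smul_mul, Matrix.mul_one, Unitary.coe_mul_star_self]
  rw [Unitary.mul_star_self_of_mem (SetLike.coe_mem _)]

/-- For qubit pure states `|a⟩ = |0⟩` and `|b⟩ = cosθ|0⟩+sinθ|1⟩` with
`θ ∈ (0,π/2)`, the trace distance is `|sin θ|`; hence for `|sin θ| ≤ ε` we get
`C_{ε,max}(|a⟩⟨a|) ≥ C(|b⟩⟨b|) > 0`, although `|a⟩⟨a|` is incoherent, so the dual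
ε-smooth quantifier violates faithfulness. -/
theorem dual_epsilon_smooth_not_faithful
    (θ : ℝ) (hθ0 : 0 < θ) (hθ : θ < Real.pi / 2)
    (a b : Fin 2 → ℂ)
    (ha : a = ![1, 0])
    (hb : b = ![(Real.cos θ : ℂ), (Real.sin θ : ℂ)])
    (ρa ρb : Matrix (Fin 2) (Fin 2) ℂ)
    (hρa : ρa = Matrix.vecMulVec a (star a))
    (hρb : ρb = Matrix.vecMulVec b (star b))
    (C : Matrix (Fin 2) (Fin 2) ℂ → ℝ)
    (hCnn : ∀ τ, 0 ≤ C τ)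
    (hCb : 0 < C ρb)
    (ε : ℝ) (hε : 0 < ε) (hsin : |Real.sin θ| ≤ ε)
    (hbdd : BddAbove (C '' {τ | IsDensity τ ∧ traceDist ρa τ ≤ ε})) :
    traceDist ρa ρb = |Real.sin θ| ∧
      C ρb ≤ CmaxQ C ε ρa ∧ 0 < CmaxQ C ε ρa ∧ Matrix.IsDiag ρa := by
  set s := Real.sin θ with hs
  set c := Real.cos θ with hc
  have hpyth : s ^ 2 + c ^ 2 = 1 := Real.sin_sq_add_cos_sq θ
  set S : Matrix (Fin 2) (Fin 2) ℂ := ((|s| : ℝ) : ℂ) • 1 with hS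
  have hSpsd : S.PosSemidef := by
    rw [hS]
    constructor
    · ext i j
      by_cases h : i = j
      · subst h
        simp [Matrix.conjTranspose_apply, Matrix.one_apply, Complex.star_def,
          Complex.conj_ofReal]
      · simp [Matrix.conjTranspose_apply, Matrix.one_apply, h, Ne.symm h]
    · intro x
      have h1 : (0:ℂ) ≤ ((|s| : ℝ) : ℂ) := by
        rw [Complex.zero_le_real]; exact abs_nonneg s
      exact ((Matrix.PosSemidef.one (n := Fin 2) (R := ℂ)).smul h1).2 x
  have hsq : S ^ 2 = (ρa - ρb).conjTranspose * (ρa - ρb) := by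
    rw [hS, hρa, hρb, ha, hb]
    ext i j
    fin_cases i <;> fin_cases j <;>
      simp only [Matrix.mul_apply, Matrix.vecMulVec_apply, Matrix.conjTranspose_apply,
        Matrix.sub_apply, Fin.sum_univ_two] <;>
      simp [Matrix.mul_apply, Matrix.vecMulVec_apply, Fin.sum_univ_two, pow_two,
        Matrix.one_apply, Matrix.conjTranspose_apply, Matrix.sub_apply, ← Complex.ofReal_mul,
        ← Complex.ofReal_sub, ← Complex.ofReal_add, ← Complex.ofReal_one,
        abs_mul_abs_self] <;>
      first
        | nlinarith [hpyth]
        | (norm_cast; linear_combination (-(s*c)) * hpyth)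
        | (rw [Complex.ofReal_inj]; nlinarith [hpyth])
        | (rw [← Complex.ofReal_neg, ← Complex.ofReal_add]; norm_cast; linear_combination (-(s*c)) * hpyth)
  have hsqrt : (Matrix.posSemidef_conjTranspose_mul_self (ρa - ρb)).sqrt = S := by
    rw [hS]
    apply sqrt_of_eq_smul_one _ |s| (abs_nonneg s)
    rw [← hsq, hS, smul_pow, one_pow]
    push_cast
    rfl
  have hTD : traceDist ρa ρb = |s| := by
    rw [traceDist, hsqrt, hS]
    simp [Matrix.trace, Matrix.diag, Matrix.one_apply, Fin.sum_univ_two]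
  have hρbDensity : IsDensity ρb := by
    constructor
    · rw [hρb]; exact psd_vmv b
    · rw [hρb, hb]
      simp [Matrix.trace, Matrix.diag, Matrix.vecMulVec_apply, Fin.sum_univ_two,
        ← Complex.ofReal_mul, ← Complex.ofReal_add]
      norm_cast
      nlinarith [hpyth]
  have hmem : C ρb ∈ C '' {τ | IsDensity τ ∧ traceDist ρa τ ≤ ε} :=
    ⟨ρb, ⟨hρbDensity, by rw [hTD]; exact hsin⟩, rfl⟩
  have hle : C ρb ≤ CmaxQ C ε ρa := le_csSup hbdd hmem
  refine ⟨hTD, hle, lt_of_lt_of_le hCb hle, ?_⟩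
  intro i j hij
  rw [hρa, ha]
  fin_cases i <;> fin_cases j <;> simp_all [Matrix.vecMulVec_apply]
end
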